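/- arXiv:2105.07038 — 4 statements merged into one kernel-verified Lean document; each statement's English description precedes it below -/
import Mathlib

section
/- Let k ≥ 2 and let a_1,...,a_k and b_1,...,b_k be positive integers with b_i ≥ a_i for every i. If there exists a 2-coloring of the edges of the complete multipartite graph K_{a_1,...,a_k} admitting no cover of its vertex set by two monochromatic subgraphs each of diameter at most 2, then there also exists such a 2-coloring of K_{b_1,...,b_k}. Equivalently, if D_2^2(K_{a_1,...,a_k}) ≥ 3 then D_2^2(K_{b_1,...,b_k}) ≥ 3. -/
open SimpleGraph

/-- The spanning subgraph of `G` consisting of the edges that receive color `b`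
under the edge-coloring `c`. -/
def SimpleGraph.colorSubgraph {V : Type*} (G : SimpleGraph V) (c : Sym2 V → Bool) (b : Bool) :
    SimpleGraph V where
  Adj u v := G.Adj u v ∧ c s(u, v) = b
  symm := ⟨fun u v h => ⟨h.1.symm, by rw [Sym2.eq_swap]; exact h.2⟩⟩
  loopless := ⟨fun u h => G.loopless.irrefl u h.1⟩

/-- There are two monochromatic connected subgraphs, each of diameter at most `d`,
whose vertex sets together cover all of `V`. -/
def HasMonoCover {V : Type*} (G : SimpleGraph V) (c : Sym2 V → Bool) (d : ℕ) : Prop :=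
  ∃ (S₁ S₂ : Set V) (b₁ b₂ : Bool),
    (SimpleGraph.induce S₁ (G.colorSubgraph c b₁)).Connected ∧
    (SimpleGraph.induce S₁ (G.colorSubgraph c b₁)).ediam ≤ (d : ℕ∞) ∧
    (SimpleGraph.induce S₂ (G.colorSubgraph c b₂)).Connected ∧
    (SimpleGraph.induce S₂ (G.colorSubgraph c b₂)).ediam ≤ (d : ℕ∞) ∧
    S₁ ∪ S₂ = Set.univ
lemma push_lemma {V W : Type*} {G : SimpleGraph V} {H : SimpleGraph W} (φ : G →g H)
    (hsurj : Function.Surjective φ) (hc : G.Connected) (hd : G.ediam ≤ (2 : ℕ∞)) :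
    H.Connected ∧ H.ediam ≤ (2 : ℕ∞) := by
  refine ⟨hc.map φ hsurj, ?_⟩
  rw [SimpleGraph.ediam_le_iff]
  intro x y
  obtain ⟨u, rfl⟩ := hsurj x
  obtain ⟨v, rfl⟩ := hsurj y
  obtain ⟨p, hp⟩ := hc.exists_walk_length_eq_edist u v
  calc H.edist (φ u) (φ v) ≤ (p.map φ).length := SimpleGraph.edist_le _
    _ = (p.length : ℕ∞) := by rw [SimpleGraph.Walk.length_map]
    _ = G.edist u v := hp
    _ ≤ G.ediam := SimpleGraph.edist_le_ediam
    _ ≤ 2 := hd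

theorem stmt3 (k : ℕ) (hk : 2 ≤ k) (a b : Fin k → ℕ)
    (ha : ∀ i, 1 ≤ a i) (hab : ∀ i, a i ≤ b i)
    (h : ∃ col : Sym2 (Σ i : Fin k, Fin (a i)) → Bool,
      ¬ HasMonoCover (completeMultipartiteGraph (fun i : Fin k => Fin (a i))) col 2) :
    ∃ col : Sym2 (Σ i : Fin k, Fin (b i)) → Bool,
      ¬ HasMonoCover (completeMultipartiteGraph (fun i : Fin k => Fin (b i))) col 2 := by
  obtain ⟨col, hcol⟩ := h
  set f : (Σ i : Fin k, Fin (b i)) → (Σ i : Fin k, Fin (a i)) :=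
    fun x => ⟨x.1, ⟨min x.2.val (a x.1 - 1), by have h1 := ha x.1; omega⟩⟩ with hf
  have hsurj : Function.Surjective f := by
    rintro ⟨i, y⟩
    refine ⟨⟨i, ⟨y.val, lt_of_lt_of_le y.isLt (hab i)⟩⟩, ?_⟩
    simp only [hf]
    congr 1
    have := y.isLt
    ext
    simp
    omega
  have hfst : ∀ x, (f x).1 = x.1 := fun x => rfl
  refine ⟨fun e => col (e.map f), fun hcover => hcol ?_⟩
  obtain ⟨S₁, S₂, b₁, b₂, hc₁, hd₁, hc₂, hd₂, hcov⟩ := hcover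
  -- build the hom for a set S and bool c
  have key : ∀ (S : Set (Σ i : Fin k, Fin (b i))) (c : Bool),
      (SimpleGraph.induce S ((completeMultipartiteGraph (fun i : Fin k => Fin (b i))).colorSubgraph (fun e => col (e.map f)) c)).Connected →
      (SimpleGraph.induce S ((completeMultipartiteGraph (fun i : Fin k => Fin (b i))).colorSubgraph (fun e => col (e.map f)) c)).ediam ≤ (2 : ℕ∞) →
      (SimpleGraph.induce (f '' S) ((completeMultipartiteGraph (fun i : Fin k => Fin (a i))).colorSubgraph col c)).Connected ∧
      (SimpleGraph.induce (f '' S) ((completeMultipartiteGraph (fun i : Fin k => Fin (a i))).colorSubgraph col c)).ediam ≤ (2 : ℕ∞) := by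
    intro S c hc hd
    refine push_lemma ⟨fun u => ⟨f u.val, ⟨u.val, u.2, rfl⟩⟩, ?_⟩ ?_ hc hd
    · rintro ⟨u, hu⟩ ⟨v, hv⟩ ⟨hadj, hcol'⟩
      refine ⟨hadj, ?_⟩
      rw [← hcol']
      simp [Sym2.map_pair_eq]
    · rintro ⟨x, u, hu, rfl⟩
      exact ⟨⟨u, hu⟩, rfl⟩
  refine ⟨f '' S₁, f '' S₂, b₁, b₂, (key S₁ b₁ hc₁ hd₁).1, (key S₁ b₁ hc₁ hd₁).2,
    (key S₂ b₂ hc₂ hd₂).1, (key S₂ b₂ hc₂ hd₂).2, ?_⟩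
  rw [← Set.image_union, hcov, Set.image_univ]
  exact Set.range_eq_univ.mpr hsurj
end

section
/- Let a ≥ b ≥ c ≥ 1 be integers. Then D_2^2(K_{a,b,c}) = 1 if and only if (a,b,c) = (1,1,1) or (a,b,c) = (2,1,1); that is, every 2-coloring of the edges of K_{a,b,c} admits two monochromatic subgraphs, each of diameter at most 1, whose vertex sets cover all vertices, if and only if (a,b,c) ∈ {(1,1,1), (2,1,1)}. -/
open SimpleGraph

lemma adj_of_mem_of_ediam_le_one {V : Type*} (H : SimpleGraph V) (S : Set V)
    (hd : (SimpleGraph.induce S H).ediam ≤ 1) {x y : V} (hx : x ∈ S) (hy : y ∈ S)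
    (hne : x ≠ y) : H.Adj x y := by
  have h1 : (SimpleGraph.induce S H).edist ⟨x, hx⟩ ⟨y, hy⟩ ≤ 1 :=
    le_trans edist_le_ediam hd
  have h2 : 0 < (SimpleGraph.induce S H).edist ⟨x, hx⟩ ⟨y, hy⟩ :=
    edist_pos_of_ne (by simpa [Subtype.ext_iff] using hne)
  have h3 : (SimpleGraph.induce S H).edist ⟨x, hx⟩ ⟨y, hy⟩ = 1 :=
    le_antisymm h1 (Order.one_le_iff_pos.mpr h2)
  have := (edist_eq_one_iff_adj).mp h3
  simpa using this

lemma pair_cover {V : Type*} (H : SimpleGraph V) {u v : V} (h : H.Adj u v) :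
    (SimpleGraph.induce {u, v} H).Connected ∧ (SimpleGraph.induce {u, v} H).ediam ≤ 1 := by
  have hadj : ∀ x y : ({u, v} : Set V), x ≠ y → (SimpleGraph.induce {u, v} H).Adj x y := by
    rintro ⟨x, hx | hx⟩ ⟨y, hy | hy⟩ hne <;> subst hx <;> subst hy <;>
      simp_all [Subtype.ext_iff] <;> first | exact h | exact h.symm
  constructor
  · have : Nonempty ({u, v} : Set V) := ⟨⟨u, by simp⟩⟩
    refine Connected.mk fun x y => ?_
    by_cases hxy : x = y
    · exact hxy ▸ Reachable.refl x
    · exact (hadj x y hxy).reachable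
  · rw [ediam_le_iff]
    intro x y
    by_cases hxy : x = y
    · simp [hxy, SimpleGraph.edist_self]
    · exact le_of_eq (edist_eq_one_iff_adj.mpr (hadj x y hxy))

lemma single_cover {V : Type*} (H : SimpleGraph V) (v : V) :
    (SimpleGraph.induce {v} H).Connected ∧ (SimpleGraph.induce {v} H).ediam ≤ 1 := by
  have : Subsingleton ({v} : Set V) :=
    (Set.subsingleton_coe _).mpr Set.subsingleton_singleton
  have hne : Nonempty ({v} : Set V) := ⟨⟨v, rfl⟩⟩
  refine ⟨Connected.mk fun x y => by rw [Subsingleton.elim x y], ?_⟩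
  rw [ediam_eq_zero_of_subsingleton]
  exact zero_le_one


lemma hasMonoCover_of_pair_single {V : Type*} (G : SimpleGraph V) (col : Sym2 V → Bool)
    {u v w : V} (h1 : G.Adj u v) (hcov : ({u, v} : Set V) ∪ {w} = Set.univ) :
    HasMonoCover G col 1 := by
  have hadj : (G.colorSubgraph col (col s(u, v))).Adj u v := ⟨h1, rfl⟩
  exact ⟨{u, v}, {w}, col s(u, v), true, (pair_cover _ hadj).1, (pair_cover _ hadj).2,
    (single_cover _ w).1, (single_cover _ w).2, hcov⟩

lemma hasMonoCover_of_pairs {V : Type*} (G : SimpleGraph V) (col : Sym2 V → Bool)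
    {u v x y : V} (h1 : G.Adj u v) (h2 : G.Adj x y)
    (hcov : ({u, v} : Set V) ∪ {x, y} = Set.univ) :
    HasMonoCover G col 1 := by
  have hadj1 : (G.colorSubgraph col (col s(u, v))).Adj u v := ⟨h1, rfl⟩
  have hadj2 : (G.colorSubgraph col (col s(x, y))).Adj x y := ⟨h2, rfl⟩
  exact ⟨{u, v}, {x, y}, col s(u, v), col s(x, y), (pair_cover _ hadj1).1, (pair_cover _ hadj1).2,
    (pair_cover _ hadj2).1, (pair_cover _ hadj2).2, hcov⟩

theorem stmt8 (a b c : ℕ) (hab : b ≤ a) (hbc : c ≤ b) (hc : 1 ≤ c) :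
    (∀ col : Sym2 (Σ i : Fin 3, Fin (![a, b, c] i)) → Bool,
      HasMonoCover (completeMultipartiteGraph (fun i : Fin 3 => Fin (![a, b, c] i))) col 1) ↔
    ((a = 1 ∧ b = 1 ∧ c = 1) ∨ (a = 2 ∧ b = 1 ∧ c = 1)) := by
  constructor
  · -- forward direction
    intro hAll
    by_contra hgood
    push_neg at hgood
    have key : 3 ≤ a ∨ (a = 2 ∧ b = 2) := by omega
    set V := (Σ i : Fin 3, Fin (![a, b, c] i)) with hV
    set G := completeMultipartiteGraph (fun i : Fin 3 => Fin (![a, b, c] i)) with hG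
    set col : Sym2 V → Bool :=
      Sym2.lift ⟨fun u v => decide (u.1 = 0 ∨ v.1 = 0), fun u v => by simp [or_comm]⟩ with hcoldef
    have hcol : ∀ u v : V, col s(u, v) = decide (u.1 = 0 ∨ v.1 = 0) := fun u v => rfl
    obtain ⟨S₁, S₂, b₁, b₂, h₁c, h₁d, h₂c, h₂d, huniv⟩ := hAll col
    have hcov : ∀ v : V, v ∈ S₁ ∨ v ∈ S₂ := fun v =>
      Set.eq_univ_iff_forall.mp huniv v
    have inj : ∀ (S : Set V) (bb : Bool),
        (SimpleGraph.induce S (G.colorSubgraph col bb)).ediam ≤ 1 →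
        ∀ x ∈ S, ∀ y ∈ S, x.1 = y.1 → x = y := by
      intro S bb hd x hx y hy hfst
      by_contra hne
      exact (adj_of_mem_of_ediam_le_one _ _ hd hx hy hne).1 hfst
    rcases key with ha3 | ⟨rfl, rfl⟩
    · -- a ≥ 3 : three vertices in part 0 cannot be covered by two cliques
      have v0 : V := ⟨0, ⟨0, show (0:ℕ) < a by omega⟩⟩
      set w0 : V := ⟨0, ⟨0, show (0:ℕ) < a by omega⟩⟩ with hw0
      set w1 : V := ⟨0, ⟨1, show (1:ℕ) < a by omega⟩⟩ with hw1
      set w2 : V := ⟨0, ⟨2, show (2:ℕ) < a by omega⟩⟩ with hw2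
      have ne01 : w0 ≠ w1 := fun h => by
        simpa [hw0, hw1] using congrArg (fun z : V => z.2.val) h
      have ne02 : w0 ≠ w2 := fun h => by
        simpa [hw0, hw2] using congrArg (fun z : V => z.2.val) h
      have ne12 : w1 ≠ w2 := fun h => by
        have h' := congrArg (fun z : V => z.2.val) h
        rw [hw1, hw2] at h'
        simp at h'
      rcases hcov w0 with h0 | h0 <;> rcases hcov w1 with h1 | h1 <;>
        rcases hcov w2 with h2 | h2 <;>
        first
          | exact ne01 (inj S₁ b₁ h₁d w0 h0 w1 h1 rfl)
          | exact ne01 (inj S₂ b₂ h₂d w0 h0 w1 h1 rfl)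
          | exact ne02 (inj S₁ b₁ h₁d w0 h0 w2 h2 rfl)
          | exact ne02 (inj S₂ b₂ h₂d w0 h0 w2 h2 rfl)
          | exact ne12 (inj S₁ b₁ h₁d w1 h1 w2 h2 rfl)
          | exact ne12 (inj S₂ b₂ h₂d w1 h1 w2 h2 rfl)
    · -- a = b = 2
      set A0 : V := ⟨0, ⟨0, show (0:ℕ) < 2 by omega⟩⟩ with hA0
      set A1 : V := ⟨0, ⟨1, show (1:ℕ) < 2 by omega⟩⟩ with hA1
      set B0 : V := ⟨1, ⟨0, show (0:ℕ) < 2 by omega⟩⟩ with hB0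
      set B1 : V := ⟨1, ⟨1, show (1:ℕ) < 2 by omega⟩⟩ with hB1
      set X : V := ⟨2, ⟨0, show (0:ℕ) < c by omega⟩⟩ with hX
      have neA : A0 ≠ A1 := fun h => by
        simpa [hA0, hA1] using congrArg (fun z : V => z.2.val) h
      have neB : B0 ≠ B1 := fun h => by
        simpa [hB0, hB1] using congrArg (fun z : V => z.2.val) h
      -- the set containing X contains a part-0 vertex and a part-1 vertex: contradiction
      have main : ∀ (S : Set V) (bb : Bool),
          (SimpleGraph.induce S (G.colorSubgraph col bb)).ediam ≤ 1 →
          ∀ u ∈ S, u.1 = 0 → ∀ w ∈ S, w.1 = 1 → X ∈ S → False := by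
        intro S bb hd u hu hu0 w hw hw1 hXS
        have huw : u ≠ w := fun h => by
          rw [h] at hu0; rw [hu0] at hw1
          exact (show (0 : Fin 3) ≠ 1 by decide) hw1
        have hwX : w ≠ X := fun h => by
          rw [h] at hw1
          exact absurd hw1 (show X.1 ≠ 1 from (show (2 : Fin 3) ≠ 1 by decide))
        have a1 := (adj_of_mem_of_ediam_le_one _ _ hd hu hw huw).2
        have a2 := (adj_of_mem_of_ediam_le_one _ _ hd hw hXS hwX).2
        rw [hcol] at a1 a2
        have hX2 : X.1 = 2 := rfl
        rw [hu0] at a1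
        rw [hw1, hX2] at a2
        simp at a1 a2
        rw [a1] at a2
        exact Bool.noConfusion a2
      have pick : ∀ (S T : Set V), (∀ v : V, v ∈ S ∨ v ∈ T) →
          (∀ x ∈ T, ∀ y ∈ T, x.1 = y.1 → x = y) →
          ∀ (p q : V), p.1 = q.1 → p ≠ q → p ∈ S ∨ q ∈ S := by
        intro S T hcv hinj p q hpq hne
        by_contra hcon
        push_neg at hcon
        have hp := (hcv p).resolve_left hcon.1
        have hq := (hcv q).resolve_left hcon.2
        exact hne (hinj p hp q hq hpq)
      rcases hcov X with hXS | hXS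
      · have hA := pick S₁ S₂ hcov (inj S₂ b₂ h₂d) A0 A1 rfl neA
        have hB := pick S₁ S₂ hcov (inj S₂ b₂ h₂d) B0 B1 rfl neB
        rcases hA with hA | hA <;> rcases hB with hB | hB <;>
          exact main S₁ b₁ h₁d _ hA rfl _ hB rfl hXS
      · have hcov' : ∀ v : V, v ∈ S₂ ∨ v ∈ S₁ := fun v => (hcov v).symm
        have hA := pick S₂ S₁ hcov' (inj S₁ b₁ h₁d) A0 A1 rfl neA
        have hB := pick S₂ S₁ hcov' (inj S₁ b₁ h₁d) B0 B1 rfl neB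
        rcases hA with hA | hA <;> rcases hB with hB | hB <;>
          exact main S₂ b₂ h₂d _ hA rfl _ hB rfl hXS
  · -- backward direction
    rintro (⟨rfl, rfl, rfl⟩ | ⟨rfl, rfl, rfl⟩) <;> intro col
    · -- (1,1,1)
      refine hasMonoCover_of_pair_single _ col
        (u := ⟨0, ⟨0, by decide⟩⟩) (v := ⟨1, ⟨0, by decide⟩⟩) (w := ⟨2, ⟨0, by decide⟩⟩)
        (by simp) ?_
      ext ⟨i, k⟩
      simp only [Set.mem_union, Set.mem_insert_iff, Set.mem_singleton_iff, Set.mem_univ,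
        iff_true]
      fin_cases i <;> fin_cases k <;> simp
    · -- (2,1,1)
      refine hasMonoCover_of_pairs _ col
        (u := ⟨0, ⟨0, by decide⟩⟩) (v := ⟨1, ⟨0, by decide⟩⟩)
        (x := ⟨0, ⟨1, by decide⟩⟩) (y := ⟨2, ⟨0, by decide⟩⟩)
        (by simp) (by simp) ?_
      ext ⟨i, k⟩
      simp only [Set.mem_union, Set.mem_insert_iff, Set.mem_singleton_iff, Set.mem_univ,
        iff_true]
      fin_cases i <;> fin_cases k <;> simp
end

section
/- There exists a 2-coloring of the edges of the complete tripartite graph K_{2,2,1} (namely, color red all edges incident with the vertex in the part of size 1 and color all other edges blue) under which no two monochromatic subgraphs, each of diameter at most 1, have vertex sets covering all five vertices. Equivalently, D_2^2(K_{2,2,1}) ≥ 2. -/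
open SimpleGraph

abbrev Vt5 := (Σ i : Fin 3, Fin (![2, 2, 1] i))

def zv5 : Vt5 := ⟨2, (0 : Fin 1)⟩

def myCol5 : Sym2 Vt5 → Bool := fun e => decide (zv5 ∈ e)

lemma noTriangle5 : ∀ (bb : Bool) (a b c : Vt5), a ≠ b → a ≠ c → b ≠ c →
    (a.1 ≠ b.1 ∧ myCol5 s(a,b) = bb) → (a.1 ≠ c.1 ∧ myCol5 s(a,c) = bb) →
    (b.1 ≠ c.1 ∧ myCol5 s(b,c) = bb) → False := by decide

lemma small5 (S : Set Vt5) (bb : Bool)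
    (hd : (SimpleGraph.induce S
      ((completeMultipartiteGraph (fun i : Fin 3 => Fin (![2, 2, 1] i))).colorSubgraph myCol5 bb)).ediam
      ≤ (1 : ℕ∞)) : S.ncard ≤ 2 := by
  by_contra h
  push_neg at h
  obtain ⟨a, b, c, ha, hb, hc, hab, hac, hbc⟩ := (Set.two_lt_ncard_iff S.toFinite).mp h
  set H := SimpleGraph.induce S
      ((completeMultipartiteGraph (fun i : Fin 3 => Fin (![2, 2, 1] i))).colorSubgraph myCol5 bb)
  have adj : ∀ (u v : Vt5) (hu : u ∈ S) (hv : v ∈ S), u ≠ v →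
      (u.1 ≠ v.1 ∧ myCol5 s(u,v) = bb) := by
    intro u v hu hv huv
    have hne : (⟨u, hu⟩ : S) ≠ ⟨v, hv⟩ := fun h => huv (congrArg Subtype.val h)
    have h1 : H.edist ⟨u, hu⟩ ⟨v, hv⟩ ≤ 1 := le_trans edist_le_ediam hd
    have h0 : H.edist ⟨u, hu⟩ ⟨v, hv⟩ ≠ 0 := edist_eq_zero_iff.ne.mpr hne
    have : H.edist ⟨u, hu⟩ ⟨v, hv⟩ = 1 :=
      le_antisymm h1 (Order.one_le_iff_pos.mpr (pos_iff_ne_zero.mpr h0))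
    exact edist_eq_one_iff_adj.mp this
  exact noTriangle5 bb a b c hab hac hbc (adj a b ha hb hab) (adj a c ha hc hac)
    (adj b c hb hc hbc)

theorem stmt10 :
    ∃ col : Sym2 (Σ i : Fin 3, Fin (![2, 2, 1] i)) → Bool,
      ¬ HasMonoCover (completeMultipartiteGraph (fun i : Fin 3 => Fin (![2, 2, 1] i))) col 1 := by
  refine ⟨myCol5, ?_⟩
  rintro ⟨S₁, S₂, b₁, b₂, _, hd₁, _, hd₂, hu⟩
  have h1 := small5 S₁ b₁ hd₁
  have h2 := small5 S₂ b₂ hd₂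
  have hcard : (S₁ ∪ S₂).ncard ≤ 4 :=
    le_trans (Set.ncard_union_le S₁ S₂) (by omega)
  rw [hu, Set.ncard_univ] at hcard
  have h5 : Nat.card ((i : Fin 3) × Fin (![2, 2, 1] i)) = 5 := by
    rw [Nat.card_eq_fintype_card]; decide
  omega
end

section
/- Let k ≥ 2 and let G_k be the complete multipartite graph with k parts each of size 2. Let c be a 2-coloring of the edges of G_k such that no two monochromatic subgraphs, each of diameter at most 2, have vertex sets covering all of V(G_k). Then for every vertex v of G_k, with clone v' (the unique vertex not adjacent to v), and for every pair of colors (i,j) ∈ {1,2}², there exists a vertex w ∉ {v, v'} such that the edge vw has color i and the edge v'w has color j. In particular, v and v' are joined by paths of length 2 of every possible color pattern. -/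
open SimpleGraph

/-- The clone of a vertex of the complete multipartite graph with parts of size `2`:
the unique other vertex in its own part. -/
def clone {k : ℕ} (v : Σ _ : Fin k, Fin 2) : Σ _ : Fin k, Fin 2 :=
  ⟨v.1, v.2 + 1⟩

lemma hub_lemma {V : Type*} (G : SimpleGraph V) (h0 : V) (hadj : ∀ u, u ≠ h0 → G.Adj h0 u) :
    G.Connected ∧ G.ediam ≤ (2 : ℕ∞) := by
  have hre : ∀ u, G.Reachable h0 u := fun u => by
    by_cases hu : u = h0
    · subst hu; exact Reachable.refl _
    · exact (hadj u hu).reachable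
  have hconn : G.Connected := by
    haveI : Nonempty V := ⟨h0⟩
    exact ⟨fun u w => (hre u).symm.trans (hre w)⟩
  have hd : ∀ u, G.edist h0 u ≤ 1 := fun u => by
    by_cases hu : u = h0
    · subst hu; simp [SimpleGraph.edist_self]
    · calc G.edist h0 u ≤ ((Walk.cons (hadj u hu) Walk.nil).length : ℕ∞) := edist_le _
        _ = 1 := by simp
  refine ⟨hconn, ediam_le_of_edist_le fun u w => ?_⟩
  calc G.edist u w ≤ G.edist u h0 + G.edist h0 w := SimpleGraph.edist_triangle
    _ ≤ 1 + 1 := add_le_add (SimpleGraph.edist_comm ▸ hd u) (hd w)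
    _ = 2 := by norm_num

lemma eq_or_eq_clone {k : ℕ} (v w : Σ _ : Fin k, Fin 2) (hfst : w.1 = v.1) :
    w = v ∨ w = clone v := by
  obtain ⟨a, x⟩ := w; obtain ⟨b, y⟩ := v
  dsimp at hfst; subst hfst
  have hxy : x = y ∨ x = y + 1 := by revert x y; decide
  rcases hxy with h | h <;> subst h
  · exact Or.inl rfl
  · exact Or.inr rfl

lemma clone_clone {k : ℕ} (v : Σ _ : Fin k, Fin 2) : clone (clone v) = v := by
  obtain ⟨a, x⟩ := v
  show (⟨a, x + 1 + 1⟩ : Σ _ : Fin k, Fin 2) = ⟨a, x⟩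
  have hx : x + 1 + 1 = x := by revert x; decide
  rw [hx]

lemma bool_ne_eq_not : ∀ a b : Bool, a ≠ b → a = !b := by decide

lemma bool_ne_not_eq : ∀ a b : Bool, a ≠ !b → a = b := by decide

lemma star_cover {k : ℕ} (col : Sym2 (Σ _ : Fin k, Fin 2) → Bool)
    (v : Σ _ : Fin k, Fin 2) (b : Bool) :
    let G := completeMultipartiteGraph (fun _ : Fin k => Fin 2)
    let S : Set (Σ _ : Fin k, Fin 2) := insert v {w | col s(v, w) = b ∧ w ≠ v ∧ w ≠ clone v}
    (SimpleGraph.induce S (G.colorSubgraph col b)).Connected ∧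
    (SimpleGraph.induce S (G.colorSubgraph col b)).ediam ≤ (2 : ℕ∞) := by
  intro G S
  have hv : v ∈ S := Set.mem_insert _ _
  apply hub_lemma _ (⟨v, hv⟩ : S)
  rintro ⟨u, hu⟩ hne
  rcases hu with rfl | ⟨hcol, hnv, hnc⟩
  · exact absurd rfl hne
  · have hadj : G.Adj v u := by
      intro hfst
      rcases eq_or_eq_clone v u hfst.symm with h | h
      · exact hnv h
      · exact hnc h
    exact ⟨hadj, hcol⟩

theorem stmt15 (k : ℕ) (hk : 2 ≤ k)
    (col : Sym2 (Σ _ : Fin k, Fin 2) → Bool)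
    (h : ¬ HasMonoCover (completeMultipartiteGraph (fun _ : Fin k => Fin 2)) col 2)
    (v : Σ _ : Fin k, Fin 2) (i j : Bool) :
    ∃ w : Σ _ : Fin k, Fin 2, w ≠ v ∧ w ≠ clone v ∧
      col s(v, w) = i ∧ col s(clone v, w) = j := by
  by_contra hc
  push_neg at hc
  apply h
  set G := completeMultipartiteGraph (fun _ : Fin k => Fin 2) with hG
  refine ⟨insert v {w | col s(v, w) = !i ∧ w ≠ v ∧ w ≠ clone v},
    insert (clone v) {w | col s(clone v, w) = !j ∧ w ≠ v ∧ w ≠ clone v}, !i, !j,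
    (star_cover col v (!i)).1, (star_cover col v (!i)).2, ?_, ?_, ?_⟩
  · have hset : {w | col s(clone v, w) = !j ∧ w ≠ v ∧ w ≠ clone v} =
        {w | col s(clone v, w) = !j ∧ w ≠ clone v ∧ w ≠ clone (clone v)} := by
      rw [clone_clone]
      ext w
      simp only [Set.mem_setOf_eq]
      tauto
    rw [hset]
    exact (star_cover col (clone v) (!j)).1
  · have hset : {w | col s(clone v, w) = !j ∧ w ≠ v ∧ w ≠ clone v} =
        {w | col s(clone v, w) = !j ∧ w ≠ clone v ∧ w ≠ clone (clone v)} := by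
      rw [clone_clone]
      ext w
      simp only [Set.mem_setOf_eq]
      tauto
    rw [hset]
    exact (star_cover col (clone v) (!j)).2
  · ext w
    simp only [Set.mem_union, Set.mem_insert_iff, Set.mem_setOf_eq, Set.mem_univ, iff_true]
    by_cases hwv : w = v
    · exact Or.inl (Or.inl hwv)
    by_cases hwc : w = clone v
    · exact Or.inr (Or.inl hwc)
    by_cases hcolv : col s(v, w) = !i
    · exact Or.inl (Or.inr ⟨hcolv, hwv, hwc⟩)
    · have hi : col s(v, w) = i := by
        revert hcolv; cases i <;> cases hc2 : col s(v, w) <;> simp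
      have hj := hc w hwv hwc hi
      have hj' : col s(clone v, w) = !j := bool_ne_eq_not _ _ hj
      exact Or.inr (Or.inr ⟨hj', hwv, hwc⟩)
end
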